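/- arXiv:2103.11250 — 2 statements merged into one kernel-verified Lean document; each statement's English description precedes it below -/
import Mathlib

section
/- Let N be a positive integer and define g(x) := (i/(√2·N)) · H_N'(i x/√2) / H_N(i x/√2) for x ∈ ℂ with H_N(i x/√2) ≠ 0. Then g satisfies the Riccati differential equation −g'(x) − x·g(x) + 1 − N·g(x)² = 0 at every such point; this is the differential equation characterizing the high-temperature one-point resolvent of the Gaussian β-ensemble with parameter α = −N. -/
open Polynomial

/-- The physicists' Hermite polynomials, satisfying
`H_{n+1}(x) = 2 x H_n(x) - H_n'(x)`, equivalently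
`H_n(x) = (-1)^n e^{x^2} (d/dx)^n e^{-x^2}`. -/
noncomputable def physHermite : ℕ → Polynomial ℂ
  | 0 => 1
  | n + 1 => 2 * X * physHermite n - derivative (physHermite n)

lemma physHermite_deriv (n : ℕ) :
    derivative (physHermite (n+1)) = ((2*(n+1) : ℕ) : Polynomial ℂ) * physHermite n := by
  induction n with
  | zero => simp [physHermite]
  | succ n ih =>
    rw [show physHermite (n+2) = 2 * X * physHermite (n+1) - derivative (physHermite (n+1)) from rfl]
    rw [ih]
    simp only [derivative_sub, derivative_mul, derivative_X, derivative_natCast,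
      derivative_ofNat, ih]
    rw [show physHermite (n+1) = 2 * X * physHermite n - derivative (physHermite n) from rfl]
    push_cast
    ring

lemma physHermite_ode (n : ℕ) :
    derivative (derivative (physHermite n)) - 2 * X * derivative (physHermite n)
      + ((2*n : ℕ) : Polynomial ℂ) * physHermite n = 0 := by
  cases n with
  | zero => simp [physHermite]
  | succ n =>
    rw [physHermite_deriv n]
    simp only [derivative_mul, derivative_natCast, physHermite_deriv]
    rw [show physHermite (n+1) = 2 * X * physHermite n - derivative (physHermite n) from rfl]
    push_cast
    ring

/-- The function `g(x) = (i/(√2 N)) H_N'(i x/√2)/H_N(i x/√2)` satisfies the Riccati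
equation `-g' - x g + 1 - N g² = 0` wherever `H_N(i x/√2) ≠ 0`: the high-temperature
Gaussian β-ensemble resolvent equation with `α = -N`. -/
theorem stmt_7 (N : ℕ) (hN : 0 < N) (g : ℂ → ℂ)
    (hg : ∀ y : ℂ, g y = (Complex.I / ((Real.sqrt 2 : ℂ) * N)) *
      ((derivative (physHermite N)).eval (Complex.I * y / (Real.sqrt 2 : ℂ)) /
        (physHermite N).eval (Complex.I * y / (Real.sqrt 2 : ℂ)))) :
    ∀ x : ℂ, (physHermite N).eval (Complex.I * x / (Real.sqrt 2 : ℂ)) ≠ 0 →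
      -deriv g x - x * g x + 1 - (N : ℂ) * g x ^ 2 = 0 := by
  intro x ha
  have hgf : g = fun y => (Complex.I / ((Real.sqrt 2 : ℂ) * N)) *
      ((derivative (physHermite N)).eval (Complex.I * y / (Real.sqrt 2 : ℂ)) /
        (physHermite N).eval (Complex.I * y / (Real.sqrt 2 : ℂ))) := funext hg
  set s : ℂ := Complex.I / (Real.sqrt 2 : ℂ) with hs
  set z : ℂ := Complex.I * x / (Real.sqrt 2 : ℂ) with hz
  set P : Polynomial ℂ := physHermite N with hP
  set a : ℂ := P.eval z with ha'
  set b : ℂ := (derivative P).eval z with hb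
  set d : ℂ := (derivative (derivative P)).eval z with hd
  have hsqrt2 : ((Real.sqrt 2 : ℝ) : ℂ) ≠ 0 := by
    norm_cast
    positivity
  have hNz : (N : ℂ) ≠ 0 := Nat.cast_ne_zero.mpr hN.ne'
  have hlin : HasDerivAt (fun y : ℂ => Complex.I * y / (Real.sqrt 2 : ℂ)) s x := by
    simpa [hs, mul_comm] using ((hasDerivAt_id x).const_mul Complex.I).div_const
      ((Real.sqrt 2 : ℝ) : ℂ)
  have h1 : HasDerivAt (fun y : ℂ => P.eval (Complex.I * y / (Real.sqrt 2 : ℂ)))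
      (b * s) x := by
    exact (P.hasDerivAt z).comp x hlin
  have h2 : HasDerivAt (fun y : ℂ => (derivative P).eval (Complex.I * y / (Real.sqrt 2 : ℂ)))
      (d * s) x := by
    exact ((derivative P).hasDerivAt z).comp x hlin
  have hq : HasDerivAt g ((Complex.I / ((Real.sqrt 2 : ℂ) * N)) *
      ((d * s * a - b * (b * s)) / a ^ 2)) x := by
    rw [hgf]
    exact (h2.div h1 ha).const_mul _
  rw [hq.deriv, hg x]
  rw [← hz, ← ha', ← hb]
  have hzx : z = s * x := by rw [hz, hs]; ring
  have hc : Complex.I / ((Real.sqrt 2 : ℂ) * N) = s / N := by rw [hs]; ring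
  have hODE : d - 2 * z * b + 2 * N * a = 0 := by
    have := congrArg (Polynomial.eval z) (physHermite_ode N)
    simpa [ha', hb, hd, ← hP, eval_mul, eval_sub, eval_add, mul_assoc] using this
  rw [hzx] at hODE
  have h2' : ((Real.sqrt 2 : ℝ) : ℂ) ^ 2 = 2 := by
    norm_cast
    rw [Real.sq_sqrt] ; norm_num
  have hs2 : s ^ 2 = -(1/2) := by
    rw [hs, div_pow, Complex.I_sq, h2']
    norm_num
  rw [hc]
  clear_value s z a b d
  clear hz hs ha' hb hd hgf hg hlin h1 h2 hq
  field_simp [hNz, ha]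
  linear_combination (-s^2*a) * hODE + (-2*s*x*a*b + 2*(N:ℂ)*a^2) * hs2
end

section
/- Let N be a positive integer and a > 0 real. Define h(x) := −(1/N) · (L_N^{(a−1)})'(−x) / L_N^{(a−1)}(−x) for x ∈ ℂ with x ≠ 0 and L_N^{(a−1)}(−x) ≠ 0. Then h satisfies the Riccati differential equation −h'(x) − (a/x + 1)·h(x) + 1/x − N·h(x)² = 0 at every such point; this is the differential equation characterizing the high-temperature one-point resolvent of the Laguerre β-ensemble with parameters (α, a) replaced by (−N, −a). -/
open Polynomial

/-- The generalized Laguerre polynomial over `ℂ` (with real parameter `a`):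
`L_N^{(a-1)}(x) = ∑_{k=0}^N (-1)^k (Γ(N+a) / (Γ(k+a) (N-k)! k!)) x^k`. -/
noncomputable def laguerre (N : ℕ) (a : ℝ) : Polynomial ℂ :=
  ∑ k ∈ Finset.range (N + 1),
    Polynomial.C (((-1 : ℝ) ^ k *
      (Real.Gamma ((N : ℝ) + a) /
        (Real.Gamma ((k : ℝ) + a) * ((N - k).factorial : ℝ) * (k.factorial : ℝ))) : ℝ) : ℂ) *
      Polynomial.X ^ k

noncomputable def lagc (N : ℕ) (a : ℝ) (k : ℕ) : ℂ :=
  (((-1 : ℝ) ^ k *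
      (Real.Gamma ((N : ℝ) + a) /
        (Real.Gamma ((k : ℝ) + a) * ((N - k).factorial : ℝ) * (k.factorial : ℝ))) : ℝ) : ℂ)

lemma coeff_laguerre (N : ℕ) (a : ℝ) (n : ℕ) :
    (laguerre N a).coeff n = if n ≤ N then lagc N a n else 0 := by
  rw [laguerre, finset_sum_coeff]
  simp only [coeff_C_mul, coeff_X_pow, mul_ite, mul_one, mul_zero]
  rw [Finset.sum_ite_eq (Finset.range (N+1)) n]
  simp [Finset.mem_range, Nat.lt_succ_iff, lagc]

lemma lagc_rec (N : ℕ) (a : ℝ) (ha : 0 < a) (k : ℕ) (hk : k < N) :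
    ((k:ℂ)+1) * ((k:ℂ) + a) * lagc N a (k+1) = ((k:ℂ) - N) * lagc N a k := by
  have hkpos : (0:ℝ) < (k:ℝ) + a := by positivity
  have hg : Real.Gamma ((↑(k+1):ℝ) + a) = ((k:ℝ)+a) * Real.Gamma ((k:ℝ)+a) := by
    have := Real.Gamma_add_one (ne_of_gt hkpos)
    push_cast
    rw [show (k:ℝ) + 1 + a = ((k:ℝ) + a) + 1 by ring, this]
  have hfac : ((N - k).factorial : ℝ) = ((N:ℝ) - k) * ((N - (k+1)).factorial : ℝ) := by
    have h1 : N - k = (N - (k+1)) + 1 := by omega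
    rw [h1, Nat.factorial_succ]
    push_cast [Nat.cast_sub (by omega : k + 1 ≤ N)]
    ring
  have hgne : Real.Gamma ((k:ℝ)+a) ≠ 0 := ne_of_gt (Real.Gamma_pos_of_pos hkpos)
  have hR : ((k:ℝ)+1) * ((k:ℝ) + a) *
      ((-1 : ℝ) ^ (k+1) * (Real.Gamma ((N : ℝ) + a) /
        (Real.Gamma ((↑(k+1) : ℝ) + a) * ((N - (k+1)).factorial : ℝ) * ((k+1).factorial : ℝ))))
      = ((k:ℝ) - N) * ((-1 : ℝ) ^ k * (Real.Gamma ((N : ℝ) + a) /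
        (Real.Gamma ((k : ℝ) + a) * ((N - k).factorial : ℝ) * (k.factorial : ℝ)))) := by
    rw [hg, hfac, Nat.factorial_succ]
    have hNk : (0:ℝ) < (N:ℝ) - k := by
      have : (k:ℝ) < N := by exact_mod_cast hk
      linarith
    have f1 : ((N - (k+1)).factorial : ℝ) ≠ 0 := Nat.cast_ne_zero.mpr (Nat.factorial_ne_zero _)
    have f2 : ((k).factorial : ℝ) ≠ 0 := Nat.cast_ne_zero.mpr (Nat.factorial_ne_zero _)
    field_simp
    push_cast
    ring
  rw [lagc, lagc]
  push_cast at hR ⊢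
  exact_mod_cast hR

lemma laguerre_ode (N : ℕ) (hN : 0 < N) (a : ℝ) (ha : 0 < a) :
    X * derivative (derivative (laguerre N a)) + (C (a:ℂ) - X) * derivative (laguerre N a)
      + (N:ℂ) • laguerre N a = 0 := by
  ext n
  simp only [coeff_add, coeff_zero, coeff_smul, smul_eq_mul, sub_mul, coeff_sub, sub_mul]
  cases n with
  | zero =>
    simp only [mul_coeff_zero, coeff_X_zero, zero_mul, coeff_C_mul, coeff_derivative,
      coeff_laguerre]
    have := lagc_rec N a ha 0 hN
    simp only [Nat.cast_zero, zero_add, one_mul, zero_sub] at this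
    simp [hN, Nat.one_le_iff_ne_zero.mpr (Nat.pos_iff_ne_zero.mp hN), this]
  | succ n =>
    rw [coeff_X_mul, coeff_X_mul]
    simp only [coeff_C_mul, coeff_derivative, coeff_laguerre]
    rcases lt_trichotomy (n+1) N with hlt | heq | hgt
    · have h2 : n+1+1 ≤ N := hlt
      have h1 : n+1 ≤ N := by omega
      rw [if_pos h2, if_pos h1]
      have := lagc_rec N a ha (n+1) hlt
      push_cast at this ⊢
      linear_combination this
    · subst heq
      rw [if_neg (by omega), if_pos le_rfl]
      push_cast
      ring
    · rw [if_neg (by omega), if_neg (by omega)]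
      ring


/-- The function `h(x) = -(1/N) (L_N^{(a-1)})'(-x)/L_N^{(a-1)}(-x)` satisfies the Riccati
equation `-h' - (a/x + 1) h + 1/x - N h² = 0` wherever `x ≠ 0` and `L_N^{(a-1)}(-x) ≠ 0`:
the high-temperature Laguerre β-ensemble resolvent equation with `(α,a) ↦ (-N,-a)`. -/
theorem stmt_15 (N : ℕ) (hN : 0 < N) (a : ℝ) (ha : 0 < a) (h : ℂ → ℂ)
    (hh : ∀ y : ℂ, h y = -(1 / (N : ℂ)) *
      ((derivative (laguerre N a)).eval (-y) / (laguerre N a).eval (-y))) :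
    ∀ x : ℂ, x ≠ 0 → (laguerre N a).eval (-x) ≠ 0 →
      -deriv h x - ((a : ℂ) / x + 1) * h x + 1 / x - (N : ℂ) * h x ^ 2 = 0 := by
  intro x hx hP
  set P := laguerre N a with hPdef
  set A := P.eval (-x) with hA
  set B := (derivative P).eval (-x) with hB
  set Cc := (derivative (derivative P)).eval (-x) with hC
  have hN' : (N:ℂ) ≠ 0 := Nat.cast_ne_zero.mpr (Nat.pos_iff_ne_zero.mp hN)
  have hode : (-x) * Cc + ((a:ℂ) - (-x)) * B + (N:ℂ) * A = 0 := by
    have h0 := laguerre_ode N hN a ha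
    have h1 := congrArg (eval (-x)) h0
    simpa [eval_add, eval_mul, eval_sub, eval_smul, smul_eq_mul] using h1
  have h1 : HasDerivAt (fun y : ℂ => (derivative P).eval (-y)) (Cc * (-1)) x := by
    exact HasDerivAt.comp x ((derivative P).hasDerivAt (-x)) (hasDerivAt_neg x)
  have h2 : HasDerivAt (fun y : ℂ => P.eval (-y)) (B * (-1)) x := by
    exact HasDerivAt.comp x (P.hasDerivAt (-x)) (hasDerivAt_neg x)
  have h3 : HasDerivAt h (-(1/(N:ℂ)) * ((Cc * (-1) * A - B * (B * (-1))) / A ^ 2)) x := by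
    have he : h = fun y => -(1/(N:ℂ)) * ((derivative P).eval (-y) / P.eval (-y)) := funext hh
    rw [he]
    exact HasDerivAt.const_mul _ (h1.div h2 hP)
  have hD : deriv h x = -(1/(N:ℂ)) * ((Cc * (-1) * A - B * (B * (-1))) / A ^ 2) := h3.deriv
  rw [hD, hh x]
  clear_value A B Cc
  rw [← hA, ← hB]
  field_simp
  linear_combination A * hode
end
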